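/- Let G be a digraph on n vertices, let γ be the number of unordered pairs of nonadjacent vertices of G, and suppose that G has an acyclic spanning subdigraph G' with |E(G)| - |E(G')| ≤ c·γ for some constant c > 0. Then G has a vertex of outdegree at most √(2cγ). -/

import Mathlib

lemma exists_rev_topo_chain (V : Type*) [Fintype V] [DecidableEq V]
    (E' : V → V → Prop)
    (hacyclic : ∀ v, ¬Relation.TransGen E' v v) :
    ∀ k : ℕ, k ≤ Fintype.card V → ∃ g : Fin k → V, Function.Injective g ∧
      ∀ i : Fin k, ∀ u, E' (g i) u → ∃ j : Fin k, j < i ∧ g j = u := by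
  have hirr : IsIrrefl V (fun a b => Relation.TransGen E' b a) := ⟨fun a h => hacyclic a h⟩
  have htr : IsTrans V (fun a b => Relation.TransGen E' b a) :=
    ⟨fun a b c hab hbc => hbc.trans hab⟩
  have wf : WellFounded (fun a b : V => Relation.TransGen E' b a) :=
    Finite.wellFounded_of_trans_of_irrefl _
  intro k
  induction k with
  | zero =>
    intro _
    exact ⟨fun i => i.elim0, fun i => i.elim0, fun i => i.elim0⟩
  | succ k ih =>
    intro hk
    obtain ⟨g, hginj, hgout⟩ := ih (Nat.le_of_succ_le hk)
    set t : Finset V := Finset.image g Finset.univ with ht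
    have htcard : t.card = k := by
      rw [ht, Finset.card_image_of_injective _ hginj, Finset.card_univ, Fintype.card_fin]
    have hne : (Finset.univ \ t).Nonempty := by
      rw [← Finset.card_pos, Finset.card_sdiff_of_subset (Finset.subset_univ t), Finset.card_univ, htcard]
      omega
    set s := Finset.univ \ t with hs
    set shas : (↑s : Set V).Nonempty := ⟨hne.choose, hne.choose_spec⟩
    set v : V := wf.min ↑s shas with hv
    have hvmem : v ∈ s := wf.min_mem ↑s shas
    have hvmax : ∀ x ∈ s, ¬ Relation.TransGen E' v x := by
      intro x hx hcon
      exact wf.not_lt_min ↑s hx hcon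
    have hvnot : v ∉ t := (Finset.mem_sdiff.mp hvmem).2
    refine ⟨fun i => if h : (i : ℕ) < k then g ⟨i, h⟩ else v, ?_, ?_⟩
    · intro a b hab
      by_cases ha : (a : ℕ) < k <;> by_cases hb : (b : ℕ) < k <;>
        simp only [ha, hb, dif_pos, dif_neg, dite_true, dite_false] at hab
      · have := hginj hab
        exact Fin.ext (by simpa using congrArg Fin.val this)
      · exact absurd (hab ▸ Finset.mem_image_of_mem g (Finset.mem_univ _)) hvnot
      · exact absurd (hab ▸ Finset.mem_image_of_mem g (Finset.mem_univ _)) hvnot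
      · exact Fin.ext (by omega)
    · intro i u hE
      by_cases hi : (i : ℕ) < k
      · simp only [hi, dif_pos] at hE
        obtain ⟨j, hj, hgj⟩ := hgout ⟨i, hi⟩ u hE
        have hj' : (j : ℕ) < (i : ℕ) := hj
        refine ⟨⟨j, by omega⟩, by simp [Fin.lt_def]; omega, ?_⟩
        simp only [show ((⟨(j:ℕ), by omega⟩ : Fin (k+1)) : ℕ) < k from j.isLt, dif_pos]
        simpa using hgj
      · simp only [hi, dif_neg] at hE
        have hu : u ∈ t := by
          by_contra hu
          exact hvmax u (Finset.mem_sdiff.mpr ⟨Finset.mem_univ u, hu⟩) (Relation.TransGen.single hE)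
        obtain ⟨j, _, hgj⟩ := Finset.mem_image.mp hu
        refine ⟨⟨j, by omega⟩, by simp [Fin.lt_def]; omega, ?_⟩
        simp only [show ((⟨(j:ℕ), by omega⟩ : Fin (k+1)) : ℕ) < k from j.isLt, dif_pos]
        exact hgj

theorem small_outdegree_vertex (V : Type*) [Fintype V] [DecidableEq V] [Nonempty V]
    (E : V → V → Prop) [DecidableRel E]
    (hloop : ∀ v, ¬E v v) (h2cyc : ∀ u v, E u v → ¬E v u)
    (γ : ℕ)
    (hγ : 2 * γ = ((Finset.univ : Finset (V × V)).filter
      (fun p => p.1 ≠ p.2 ∧ ¬E p.1 p.2 ∧ ¬E p.2 p.1)).card)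
    (c : ℝ) (hc : 0 < c)
    (E' : V → V → Prop) [DecidableRel E']
    (hsub : ∀ x y, E' x y → E x y)
    (hacyclic : ∀ v, ¬Relation.TransGen E' v v)
    (hdel : (((Finset.univ : Finset (V × V)).filter (fun p => E p.1 p.2)).card : ℝ) -
      (((Finset.univ : Finset (V × V)).filter (fun p => E' p.1 p.2)).card : ℝ) ≤ c * γ) :
    ∃ v : V, ((Finset.univ.filter (fun u => E v u)).card : ℝ) ≤ Real.sqrt (2 * c * γ) := by
  by_contra hcon
  push_neg at hcon
  set s : ℝ := Real.sqrt (2 * c * γ) with hsdef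
  set f : V → ℕ := fun v => (Finset.univ.filter (fun u => E v u ∧ ¬ E' v u)).card with hf
  set e : V → ℕ := fun v => (Finset.univ.filter (fun u => E' v u)).card with he
  set dout : V → ℕ := fun v => (Finset.univ.filter (fun u => E v u)).card with hdout
  -- outdegree splits as kept + deleted
  have hsplit : ∀ v, dout v = e v + f v := by
    intro v
    have h1 : Finset.univ.filter (fun u => E v u ∧ E' v u) =
        Finset.univ.filter (fun u => E' v u) := by
      ext u; simp only [Finset.mem_filter, Finset.mem_univ, true_and]
      exact ⟨fun h => h.2, fun h => ⟨hsub _ _ h, h⟩⟩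
    have h2 := Finset.card_filter_add_card_filter_not
      (s := Finset.univ.filter (fun u => E v u)) (p := fun u => E' v u)
    rw [Finset.filter_filter, Finset.filter_filter, h1] at h2
    simp only [hdout, he, hf]
    omega
  -- counting pairs fiberwise
  have hcount : ∀ (P : V → V → Prop) [DecidableRel P],
      ((Finset.univ : Finset (V × V)).filter (fun p => P p.1 p.2)).card =
      ∑ v, (Finset.univ.filter (fun u => P v u)).card := by
    intro P _
    rw [← Finset.univ_product_univ, Finset.card_filter, Finset.sum_product]
    exact Finset.sum_congr rfl (fun v _ => (Finset.card_filter _ _).symm)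
  have hEcard := hcount E
  have hE'card := hcount E'
  -- total deleted edges
  have hdelD : ((∑ v, f v : ℕ) : ℝ) ≤ c * γ := by
    have hsum : (∑ v, dout v) = (∑ v, e v) + ∑ v, f v := by
      rw [← Finset.sum_add_distrib]; exact Finset.sum_congr rfl (fun v _ => hsplit v)
    rw [hEcard, hE'card, hsum] at hdel
    push_cast at hdel ⊢
    linarith
  set m : ℕ := Nat.floor s + 1 with hm
  have hsnn : 0 ≤ s := Real.sqrt_nonneg _
  have hsm : s < (m : ℝ) := by
    rw [hm]; push_cast; exact Nat.lt_floor_add_one s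
  have hmd : ∀ v, m ≤ dout v := by
    intro v
    have h1 : (Nat.floor s : ℝ) < (dout v : ℝ) := lt_of_le_of_lt (Nat.floor_le hsnn) (hcon v)
    have h2 : Nat.floor s < dout v := by exact_mod_cast h1
    omega
  have hmn : m ≤ Fintype.card V := by
    refine le_trans (hmd (Classical.arbitrary V)) ?_
    simpa [hdout] using Finset.card_le_univ (Finset.univ.filter (fun u => E (Classical.arbitrary V) u))
  obtain ⟨g, hginj, hgout⟩ := exists_rev_topo_chain V E' hacyclic m hmn
  -- the i-th vertex has E'-outdegree at most i
  have hei : ∀ i : Fin m, e (g i) ≤ (i : ℕ) := by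
    intro i
    have hsub2 : Finset.univ.filter (fun u => E' (g i) u) ⊆
        Finset.image (fun j : Fin m => g j) (Finset.univ.filter (fun j => j < i)) := by
      intro u hu
      simp only [Finset.mem_filter, Finset.mem_univ, true_and] at hu
      obtain ⟨j, hj, hgj⟩ := hgout i u hu
      exact Finset.mem_image.mpr ⟨j, Finset.mem_filter.mpr ⟨Finset.mem_univ _, hj⟩, hgj⟩
    calc e (g i) ≤ (Finset.image (fun j : Fin m => g j)
          (Finset.univ.filter (fun j => j < i))).card := Finset.card_le_card hsub2
      _ ≤ (Finset.univ.filter (fun j : Fin m => j < i)).card := Finset.card_image_le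
      _ = i := by
          have h : Finset.univ.filter (fun j : Fin m => j < i) = Finset.Iio i := by ext j; simp
          rw [h, Fin.card_Iio]
  have hfi : ∀ i : Fin m, m ≤ f (g i) + (i : ℕ) := by
    intro i
    have := hsplit (g i); have := hmd (g i); have := hei i; omega
  -- sum of deleted edges over chain
  have hsum1 : ∑ i : Fin m, f (g i) ≤ ∑ v, f v := by
    rw [← Finset.sum_image (fun x _ y _ h => hginj h)]
    exact Finset.sum_le_sum_of_subset (Finset.subset_univ _)
  have hgauss : ((∑ i ∈ Finset.range m, i : ℕ) : ℝ) * 2 = (m : ℝ) * ((m : ℝ) - 1) := by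
    have := Finset.sum_range_id_mul_two m
    have h1 : ((m : ℕ) : ℝ) - 1 = ((m - 1 : ℕ) : ℝ) := by
      rw [Nat.cast_sub (by omega)]; simp
    rw [h1]
    exact_mod_cast this
  have hsum2 : (m : ℝ) * m - (m : ℝ) * ((m:ℝ) - 1) / 2 ≤ ((∑ i : Fin m, f (g i) : ℕ) : ℝ) := by
    have h1 : ∑ i : Fin m, ((m : ℝ) - (i : ℕ)) ≤ ∑ i : Fin m, ((f (g i) : ℝ)) := by
      refine Finset.sum_le_sum (fun i _ => ?_)
      have := hfi i
      have : ((m : ℕ) : ℝ) ≤ (f (g i) : ℝ) + (i : ℕ) := by exact_mod_cast this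
      linarith
    have h2 : ∑ i : Fin m, ((m : ℝ) - (i : ℕ)) = (m:ℝ) * m - (m:ℝ) * ((m:ℝ)-1) / 2 := by
      rw [Finset.sum_sub_distrib]
      simp only [Finset.sum_const, Finset.card_univ, Fintype.card_fin, nsmul_eq_mul]
      have h3 : ∑ i : Fin m, ((i : ℕ) : ℝ) = ∑ i ∈ Finset.range m, (i : ℝ) :=
        Fin.sum_univ_eq_sum_range (fun i => (i : ℝ)) m
      rw [h3]
      have h4 : ∑ i ∈ Finset.range m, (i : ℝ) = ((∑ i ∈ Finset.range m, i : ℕ) : ℝ) := by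
        push_cast; ring
      rw [h4]
      linarith [hgauss]
    rw [← h2]
    calc ∑ i : Fin m, ((m : ℝ) - (i : ℕ)) ≤ ∑ i : Fin m, ((f (g i) : ℝ)) := h1
      _ = ((∑ i : Fin m, f (g i) : ℕ) : ℝ) := by push_cast; ring
  have hfinal : ((∑ i : Fin m, f (g i) : ℕ) : ℝ) ≤ c * γ := by
    refine le_trans ?_ hdelD
    exact_mod_cast hsum1
  have hsq : s * s = 2 * c * γ := Real.mul_self_sqrt (by positivity)
  nlinarith [hsm, hsnn, hsum2, hfinal, hsq]
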